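/- Let X be a set and let 𝒜, ℬ be collections of subsets of X with 𝒜 Γ-like. Then α₂(𝒜,ℬ) holds if and only if α_{2.1}(𝒜,ℬ) holds. -/
import Mathlib


open Set

/-- A collection `𝒜` of subsets of `X` is Γ-like if every member is infinite
and every infinite subset of a member is itself a member. -/
def GammaLike {X : Type*} (𝒜 : Set (Set X)) : Prop :=
  ∀ A ∈ 𝒜, A.Infinite ∧ ∀ A' ⊆ A, A'.Infinite → A' ∈ 𝒜

/-- A collection `𝒜` is almost-Γ-like if each `A ∈ 𝒜` has a countably infinite
subset `A'` all of whose cofinite subsets belong to `𝒜`. -/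
def AlmostGammaLike {X : Type*} (𝒜 : Set (Set X)) : Prop :=
  ∀ A ∈ 𝒜, ∃ A' ⊆ A, A'.Countable ∧ A'.Infinite ∧
    ∀ A'' ⊆ A', (A' \ A'').Finite → A'' ∈ 𝒜

/-- `𝒜` is closed under finite unions. -/
def UnionClosed {X : Type*} (𝒜 : Set (Set X)) : Prop :=
  ∀ A ∈ 𝒜, ∀ B ∈ 𝒜, A ∪ B ∈ 𝒜

/-- α₁(𝒜,ℬ): for every sequence from 𝒜 there is `B ∈ ℬ` with `A n \ B` finite for all `n`. -/
def Alpha1 {X : Type*} (𝒜 ℬ : Set (Set X)) : Prop :=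
  ∀ A : ℕ → Set X, (∀ n, A n ∈ 𝒜) → ∃ B ∈ ℬ, ∀ n, (A n \ B).Finite

/-- α₂(𝒜,ℬ): for every sequence from 𝒜 there is `B ∈ ℬ` meeting each `A n` infinitely. -/
def Alpha2 {X : Type*} (𝒜 ℬ : Set (Set X)) : Prop :=
  ∀ A : ℕ → Set X, (∀ n, A n ∈ 𝒜) → ∃ B ∈ ℬ, ∀ n, (A n ∩ B).Infinite

/-- α₂'(𝒜,ℬ): for every sequence from 𝒜 there is `B ∈ ℬ` meeting each `A n`. -/
def Alpha2' {X : Type*} (𝒜 ℬ : Set (Set X)) : Prop :=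
  ∀ A : ℕ → Set X, (∀ n, A n ∈ 𝒜) → ∃ B ∈ ℬ, ∀ n, (A n ∩ B).Nonempty

/-- α₃(𝒜,ℬ): for every sequence from 𝒜 there is `B ∈ ℬ` meeting infinitely many `A n` infinitely. -/
def Alpha3 {X : Type*} (𝒜 ℬ : Set (Set X)) : Prop :=
  ∀ A : ℕ → Set X, (∀ n, A n ∈ 𝒜) → ∃ B ∈ ℬ, {n | (A n ∩ B).Infinite}.Infinite

/-- α₄(𝒜,ℬ): for every sequence from 𝒜 there is `B ∈ ℬ` meeting infinitely many `A n`. -/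
def Alpha4 {X : Type*} (𝒜 ℬ : Set (Set X)) : Prop :=
  ∀ A : ℕ → Set X, (∀ n, A n ∈ 𝒜) → ∃ B ∈ ℬ, {n | (A n ∩ B).Nonempty}.Infinite

/-- α_{1.1}(𝒜,ℬ): α₁ restricted to pairwise disjoint sequences. -/
def Alpha1p1 {X : Type*} (𝒜 ℬ : Set (Set X)) : Prop :=
  ∀ A : ℕ → Set X, (∀ n, A n ∈ 𝒜) → (∀ m n, m ≠ n → Disjoint (A m) (A n)) →
    ∃ B ∈ ℬ, ∀ n, (A n \ B).Finite

/-- α_{1.5}(𝒜,ℬ): for pairwise disjoint sequences from 𝒜 there is `B ∈ ℬ` with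
`A n \ B` finite for infinitely many `n`. -/
def Alpha1p5 {X : Type*} (𝒜 ℬ : Set (Set X)) : Prop :=
  ∀ A : ℕ → Set X, (∀ n, A n ∈ 𝒜) → (∀ m n, m ≠ n → Disjoint (A m) (A n)) →
    ∃ B ∈ ℬ, {n | (A n \ B).Finite}.Infinite

/-- α_{2.1}(𝒜,ℬ): α₂ restricted to pairwise disjoint sequences. -/
def Alpha2p1 {X : Type*} (𝒜 ℬ : Set (Set X)) : Prop :=
  ∀ A : ℕ → Set X, (∀ n, A n ∈ 𝒜) → (∀ m n, m ≠ n → Disjoint (A m) (A n)) →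
    ∃ B ∈ ℬ, ∀ n, (A n ∩ B).Infinite

/-- α_{3.1}(𝒜,ℬ): α₃ restricted to pairwise disjoint sequences. -/
def Alpha3p1 {X : Type*} (𝒜 ℬ : Set (Set X)) : Prop :=
  ∀ A : ℕ → Set X, (∀ n, A n ∈ 𝒜) → (∀ m n, m ≠ n → Disjoint (A m) (A n)) →
    ∃ B ∈ ℬ, {n | (A n ∩ B).Infinite}.Infinite

/-- α_{4.1}(𝒜,ℬ): α₄ restricted to pairwise disjoint sequences. -/
def Alpha4p1 {X : Type*} (𝒜 ℬ : Set (Set X)) : Prop :=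
  ∀ A : ℕ → Set X, (∀ n, A n ∈ 𝒜) → (∀ m n, m ≠ n → Disjoint (A m) (A n)) →
    ∃ B ∈ ℬ, {n | (A n ∩ B).Nonempty}.Infinite

/-- Player I has a winning predetermined strategy in G₁(𝒜,ℬ). -/
def PredWinG1 {X : Type*} (𝒜 ℬ : Set (Set X)) : Prop :=
  ∃ A : ℕ → Set X, (∀ n, A n ∈ 𝒜) ∧
    ∀ a : ℕ → X, (∀ n, a n ∈ A n) → Set.range a ∉ ℬ

/-- Player I has a winning predetermined strategy in G_fin(𝒜,ℬ). -/
def PredWinGfin {X : Type*} (𝒜 ℬ : Set (Set X)) : Prop :=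
  ∃ A : ℕ → Set X, (∀ n, A n ∈ 𝒜) ∧
    ∀ F : ℕ → Set X, (∀ n, (F n).Finite ∧ F n ⊆ A n) → (⋃ n, F n) ∉ ℬ

/-- Player I has a winning predetermined strategy in G_{<2}(𝒜,ℬ),
where II picks at most one point each round. -/
def PredWinGlt2 {X : Type*} (𝒜 ℬ : Set (Set X)) : Prop :=
  ∃ A : ℕ → Set X, (∀ n, A n ∈ 𝒜) ∧
    ∀ F : ℕ → Set X, (∀ n, (F n).Subsingleton ∧ F n ⊆ A n) → (⋃ n, F n) ∉ ℬ

/-- Player I has a winning predetermined strategy in G_cf(𝒜,ℬ),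
where II picks a cofinite subset each round. -/
def PredWinGcf {X : Type*} (𝒜 ℬ : Set (Set X)) : Prop :=
  ∃ A : ℕ → Set X, (∀ n, A n ∈ 𝒜) ∧
    ∀ B : ℕ → Set X, (∀ n, B n ⊆ A n ∧ (A n \ B n).Finite) → (⋃ n, B n) ∉ ℬ

/-- Player I has a winning perfect-information strategy in G₁(𝒜,ℬ):
a function from finite sequences of points of X into 𝒜 defeating all counterplays. -/
def WinG1 {X : Type*} (𝒜 ℬ : Set (Set X)) : Prop :=
  ∃ σ : List X → Set X, (∀ s, σ s ∈ 𝒜) ∧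
    ∀ a : ℕ → X, (∀ n, a n ∈ σ (List.ofFn fun i : Fin n => a i)) → Set.range a ∉ ℬ

/-- Player I has a winning perfect-information strategy in G_fin(𝒜,ℬ):
a function from finite sequences of finite subsets of X into 𝒜 defeating all counterplays. -/
def WinGfin {X : Type*} (𝒜 ℬ : Set (Set X)) : Prop :=
  ∃ σ : List (Set X) → Set X, (∀ s : List (Set X), (∀ F ∈ s, F.Finite) → σ s ∈ 𝒜) ∧
    ∀ F : ℕ → Set X,
      (∀ n, (F n).Finite ∧ F n ⊆ σ (List.ofFn fun i : Fin n => F i)) →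
      (⋃ n, F n) ∉ ℬ

/-- Player I has a winning perfect-information strategy in G_{<2}(𝒜,ℬ):
a function from finite sequences of at-most-singleton subsets of X into 𝒜
defeating all counterplays. -/
def WinGlt2 {X : Type*} (𝒜 ℬ : Set (Set X)) : Prop :=
  ∃ σ : List (Set X) → Set X, (∀ s : List (Set X), (∀ F ∈ s, F.Subsingleton) → σ s ∈ 𝒜) ∧
    ∀ F : ℕ → Set X,
      (∀ n, (F n).Subsingleton ∧ F n ⊆ σ (List.ofFn fun i : Fin n => F i)) →
      (⋃ n, F n) ∉ ℬ


section DisjointRefinement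

variable {X : Type*}

/-- The finite set of points chosen before step `j`. -/
noncomputable def chosenUpTo (A : ℕ → Set X) (h : ∀ n, (A n).Infinite) :
    ℕ → {s : Set X // s.Finite}
  | 0 => ⟨∅, Set.finite_empty⟩
  | j + 1 =>
    ⟨insert (((h (Nat.unpair j).1).diff (chosenUpTo A h j).2).nonempty.choose)
      (chosenUpTo A h j).1, (chosenUpTo A h j).2.insert _⟩

/-- The point chosen at step `j`: a fresh element of `A (Nat.unpair j).1`. -/
noncomputable def pick (A : ℕ → Set X) (h : ∀ n, (A n).Infinite) (j : ℕ) : X :=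
  ((h (Nat.unpair j).1).diff (chosenUpTo A h j).2).nonempty.choose

lemma pick_spec (A : ℕ → Set X) (h : ∀ n, (A n).Infinite) (j : ℕ) :
    pick A h j ∈ A (Nat.unpair j).1 \ (chosenUpTo A h j).1 :=
  ((h (Nat.unpair j).1).diff (chosenUpTo A h j).2).nonempty.choose_spec

lemma chosenUpTo_succ (A : ℕ → Set X) (h : ∀ n, (A n).Infinite) (j : ℕ) :
    (chosenUpTo A h (j + 1)).1 = insert (pick A h j) (chosenUpTo A h j).1 := rfl

lemma chosenUpTo_mono (A : ℕ → Set X) (h : ∀ n, (A n).Infinite) {i j : ℕ} (hij : i ≤ j) :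
    (chosenUpTo A h i).1 ⊆ (chosenUpTo A h j).1 := by
  induction j with
  | zero => simp [Nat.le_zero.mp hij]
  | succ j ih =>
    rcases Nat.le_succ_iff_eq_or_le.mp hij with h' | h'
    · rw [h']
    · exact (ih h').trans (by rw [chosenUpTo_succ]; exact Set.subset_insert _ _)

lemma pick_ne (A : ℕ → Set X) (h : ∀ n, (A n).Infinite) {i j : ℕ} (hij : i < j) :
    pick A h i ≠ pick A h j := by
  intro heq
  have h1 : pick A h i ∈ (chosenUpTo A h j).1 := by
    have : pick A h i ∈ (chosenUpTo A h (i + 1)).1 := by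
      rw [chosenUpTo_succ]; exact Set.mem_insert _ _
    exact chosenUpTo_mono A h hij this
  rw [heq] at h1
  exact (pick_spec A h j).2 h1

lemma pick_injective (A : ℕ → Set X) (h : ∀ n, (A n).Infinite) :
    Function.Injective (pick A h) := by
  intro i j hij
  rcases lt_trichotomy i j with h' | h' | h'
  · exact absurd hij (pick_ne A h h')
  · exact h'
  · exact absurd hij.symm (pick_ne A h h')

end DisjointRefinement

/-- If 𝒜 is Γ-like, then α₂(𝒜,ℬ) holds iff α_{2.1}(𝒜,ℬ) holds. -/
theorem stmt13 {X : Type*} (𝒜 ℬ : Set (Set X))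
    (hA : GammaLike 𝒜) :
    Alpha2 𝒜 ℬ ↔ Alpha2p1 𝒜 ℬ := by
  constructor
  · intro h2 A hAmem _
    exact h2 A hAmem
  · intro h21 A hAmem
    have hInf : ∀ n, (A n).Infinite := fun n => (hA _ (hAmem n)).1
    set C : ℕ → Set X := fun n => Set.range (fun k => pick A hInf (Nat.pair n k)) with hC
    have hCsub : ∀ n, C n ⊆ A n := by
      rintro n x ⟨k, rfl⟩
      have := (pick_spec A hInf (Nat.pair n k)).1
      simpa [Nat.unpair_pair] using this
    have hCinf : ∀ n, (C n).Infinite := fun n =>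
      Set.infinite_range_of_injective (fun k l hkl => by
        have h' := pick_injective A hInf hkl
        have := Nat.pair_eq_pair.mp h'
        exact this.2)
    have hCmem : ∀ n, C n ∈ 𝒜 := fun n => (hA _ (hAmem n)).2 _ (hCsub n) (hCinf n)
    have hdisj : ∀ m n, m ≠ n → Disjoint (C m) (C n) := by
      intro m n hmn
      rw [Set.disjoint_left]
      rintro x ⟨k, rfl⟩ ⟨l, hl⟩
      have h' := pick_injective A hInf hl
      exact hmn ((Nat.pair_eq_pair.mp h').1.symm)
    obtain ⟨B, hB, hBint⟩ := h21 C hCmem hdisj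
    exact ⟨B, hB, fun n =>
      (hBint n).mono (Set.inter_subset_inter_left _ (hCsub n))⟩
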